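/- arXiv:2210.00359 — 3 statements merged into one kernel-verified Lean document; each statement's English description precedes it below -/
import Mathlib

section
/- Riccati-type contraction inequality for the UKF Lyapunov argument. Let A ∈ ℝ^{n×n} be nonsingular with ‖A‖ ≤ ā, let Σ ∈ ℝ^{n×n} be symmetric positive definite with Σ ⪯ σ̄·I, and let Q̂ ∈ ℝ^{n×n} be symmetric with Q̂ ⪰ q̂·I for some q̂ > 0. Define Σ' = A Σ Aᵀ + Q̂. Then Σ' is positive definite and, with λ := q̂/(q̂ + ā²·σ̄) ∈ (0, 1), the contraction inequality Aᵀ (Σ')^{-1} A ⪯ (1 − λ)·Σ^{-1} holds. -/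
open Matrix Finset

noncomputable section

/-- Spectral norm of a real matrix (operator norm w.r.t. Euclidean norms). -/
def specNorm {m n : ℕ} (A : Matrix (Fin m) (Fin n) ℝ) : ℝ :=
  ‖LinearMap.toContinuousLinearMap (Matrix.toEuclideanLin A)‖

/-- Loewner order `A ⪯ B`: `B - A` is positive semidefinite. -/
def psdLE {n : ℕ} (A B : Matrix (Fin n) (Fin n) ℝ) : Prop := (B - A).PosSemidef

namespace RiccatiAux

open scoped Matrix.Norms.L2Operator

variable {n : ℕ}

lemma dot_self_nonneg (x : Fin n → ℝ) : 0 ≤ x ⬝ᵥ x :=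
  Finset.sum_nonneg fun i _ => mul_self_nonneg (x i)

lemma quad_congr (B M : Matrix (Fin n) (Fin n) ℝ) (x : Fin n → ℝ) :
    x ⬝ᵥ ((B * M * Bᵀ) *ᵥ x) = (Bᵀ *ᵥ x) ⬝ᵥ (M *ᵥ (Bᵀ *ᵥ x)) := by
  rw [← mulVec_mulVec, ← mulVec_mulVec, dotProduct_mulVec, ← mulVec_transpose]

lemma quad_le_of_psdLE {X Y : Matrix (Fin n) (Fin n) ℝ} (h : psdLE X Y) (x : Fin n → ℝ) :
    x ⬝ᵥ (X *ᵥ x) ≤ x ⬝ᵥ (Y *ᵥ x) := by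
  have h2 := h.dotProduct_mulVec_nonneg x
  simp only [star_trivial, sub_mulVec, dotProduct_sub] at h2
  linarith

lemma quad_smul_one (c : ℝ) (x : Fin n → ℝ) :
    x ⬝ᵥ ((c • (1 : Matrix (Fin n) (Fin n) ℝ)) *ᵥ x) = c * (x ⬝ᵥ x) := by
  rw [smul_mulVec, one_mulVec, dotProduct_smul, smul_eq_mul]

lemma psd_smul {c : ℝ} {M : Matrix (Fin n) (Fin n) ℝ} (hc : 0 ≤ c) (hM : M.PosSemidef) :
    (c • M).PosSemidef := by
  refine PosSemidef.of_dotProduct_mulVec_nonneg ?_ fun x => ?_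
  · unfold Matrix.IsHermitian
    rw [conjTranspose_smul, star_trivial, hM.1]
  · have := hM.dotProduct_mulVec_nonneg x
    rw [smul_mulVec, dotProduct_smul, smul_eq_mul]
    exact mul_nonneg hc this

lemma posdef_smul {c : ℝ} {M : Matrix (Fin n) (Fin n) ℝ} (hc : 0 < c) (hM : M.PosDef) :
    (c • M).PosDef := by
  refine PosDef.of_dotProduct_mulVec_pos (psd_smul hc.le hM.posSemidef).1 fun x hx => ?_
  have := hM.dotProduct_mulVec_pos hx
  rw [smul_mulVec, dotProduct_smul, smul_eq_mul]
  exact mul_pos hc this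

lemma psdLE_congr {X Y : Matrix (Fin n) (Fin n) ℝ} (h : psdLE X Y)
    (B : Matrix (Fin n) (Fin n) ℝ) : psdLE (B * X * Bᵀ) (B * Y * Bᵀ) := by
  have h' : (Y - X).PosSemidef := h
  have : B * Y * Bᵀ - B * X * Bᵀ = B * (Y - X) * Bᵀ := by
    rw [Matrix.mul_sub, Matrix.sub_mul]
  show (B * Y * Bᵀ - B * X * Bᵀ).PosSemidef
  rw [this, ← conjTranspose_eq_transpose_of_trivial]
  exact h'.mul_mul_conjTranspose_same B

lemma posdef_congr {X : Matrix (Fin n) (Fin n) ℝ} (hX : X.PosDef)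
    {B : Matrix (Fin n) (Fin n) ℝ} (hB : IsUnit B) : (B * X * Bᵀ).PosDef := by
  have hXt : Xᵀ = X := by
    rw [← conjTranspose_eq_transpose_of_trivial]; exact hX.1
  refine PosDef.of_dotProduct_mulVec_pos ?_ fun x hx => ?_
  · unfold Matrix.IsHermitian
    rw [conjTranspose_eq_transpose_of_trivial]
    simp [Matrix.transpose_mul, hXt, Matrix.mul_assoc]
  · rw [star_trivial, quad_congr]
    refine hX.dotProduct_mulVec_pos fun h0 => hx ?_
    have hBt : IsUnit Bᵀ := by
      rw [Matrix.isUnit_iff_isUnit_det, Matrix.det_transpose,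
        ← Matrix.isUnit_iff_isUnit_det]
      exact hB
    exact Matrix.mulVec_injective_iff_isUnit.mpr hBt (h0.trans (mulVec_zero _).symm)

lemma sq_norm_dot (y : Fin n → ℝ) :
    ‖(EuclideanSpace.equiv (Fin n) ℝ).symm y‖ ^ 2 = y ⬝ᵥ y := by
  rw [EuclideanSpace.norm_eq, Real.sq_sqrt (by positivity)]
  simp [dotProduct, Real.norm_eq_abs, sq_abs, sq]

lemma specNorm_eq (A : Matrix (Fin n) (Fin n) ℝ) : specNorm A = ‖A‖ := rfl

lemma specNorm_pos {A : Matrix (Fin n) (Fin n) ℝ} (hA0 : A ≠ 0) : 0 < specNorm A := by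
  rw [specNorm_eq]
  exact norm_pos_iff.mpr hA0

lemma quad_transpose_le (A : Matrix (Fin n) (Fin n) ℝ) (x : Fin n → ℝ) :
    (Aᵀ *ᵥ x) ⬝ᵥ (Aᵀ *ᵥ x) ≤ specNorm A ^ 2 * (x ⬝ᵥ x) := by
  have hT : ‖Aᵀ‖ = ‖A‖ := by
    rw [← conjTranspose_eq_transpose_of_trivial]; exact l2_opNorm_conjTranspose A
  have h1 : ‖(EuclideanSpace.equiv (Fin n) ℝ).symm (Aᵀ *ᵥ x)‖ ≤
      ‖Aᵀ‖ * ‖(EuclideanSpace.equiv (Fin n) ℝ).symm x‖ :=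
    l2_opNorm_mulVec Aᵀ ((EuclideanSpace.equiv (Fin n) ℝ).symm x)
  have h2 := pow_le_pow_left₀ (norm_nonneg _) h1 2
  rw [sq_norm_dot, mul_pow, hT, sq_norm_dot] at h2
  rw [specNorm_eq]
  exact h2

open scoped MatrixOrder in
/-- Inverse is antitone w.r.t. the Loewner order on positive definite matrices. -/
lemma psdLE_inv {M N : Matrix (Fin n) (Fin n) ℝ} (hM : M.PosDef) (hN : N.PosDef)
    (h : psdLE M N) : psdLE N⁻¹ M⁻¹ := by
  classical
  set R := CFC.sqrt M with hRdef
  have hRpsd : R.PosSemidef := (CFC.sqrt_nonneg M).posSemidef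
  have hRR : R * R = M := CFC.sqrt_mul_sqrt_self M hM.posSemidef.nonneg
  have hRt : Rᵀ = R := by rw [← conjTranspose_eq_transpose_of_trivial]; exact hRpsd.1
  have hMdet : IsUnit M.det := (Matrix.isUnit_iff_isUnit_det M).mp hM.isUnit
  have hRdet : IsUnit R.det := by
    have := hMdet
    rw [← hRR, Matrix.det_mul] at this
    exact isUnit_of_mul_isUnit_left this
  have hRit : (R⁻¹)ᵀ = R⁻¹ := by rw [Matrix.transpose_nonsing_inv, hRt]
  have hRiu : IsUnit R⁻¹ := by
    rw [Matrix.isUnit_iff_isUnit_det, Matrix.det_nonsing_inv, isUnit_ringInverse]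
    exact hRdet
  set C := R⁻¹ * N * R⁻¹ with hC
  have hCpd : C.PosDef := by
    have := posdef_congr hN hRiu
    rwa [hRit] at this
  have hCdet : IsUnit C.det := (Matrix.isUnit_iff_isUnit_det C).mp hCpd.isUnit
  have h1C : psdLE 1 C := by
    have h0 := psdLE_congr h R⁻¹
    rw [hRit] at h0
    have hM1 : R⁻¹ * M * R⁻¹ = 1 := by
      rw [← hRR, ← Matrix.mul_assoc, Matrix.mul_assoc (R⁻¹ * R),
        Matrix.nonsing_inv_mul R hRdet, Matrix.mul_nonsing_inv R hRdet, Matrix.one_mul]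
    rwa [hM1] at h0
  -- show `C⁻¹ ⪯ 1` using the psd square root `S` of `C⁻¹`
  have hCinv : psdLE C⁻¹ 1 := by
    have hCipd : C⁻¹.PosDef := hCpd.inv
    set S := CFC.sqrt C⁻¹ with hSdef
    have hSpsd : S.PosSemidef := (CFC.sqrt_nonneg C⁻¹).posSemidef
    have hSS : S * S = C⁻¹ := CFC.sqrt_mul_sqrt_self C⁻¹ hCipd.posSemidef.nonneg
    have hSt : Sᵀ = S := by rw [← conjTranspose_eq_transpose_of_trivial]; exact hSpsd.1
    have hSdet : IsUnit S.det := by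
      have hci : IsUnit (C⁻¹).det := (Matrix.isUnit_iff_isUnit_det _).mp hCipd.isUnit
      rw [← hSS, Matrix.det_mul] at hci
      exact isUnit_of_mul_isUnit_left hci
    have hXdet : IsUnit (S * C * S).det := by
      rw [Matrix.det_mul, Matrix.det_mul]
      exact (hSdet.mul hCdet).mul hSdet
    have hidem : (S * C * S) * (S * C * S) = S * C * S := by
      have e1 : (S * C * S) * (S * C * S) = S * (C * (S * S * (C * S))) := by
        simp only [Matrix.mul_assoc]
      rw [e1, hSS, ← Matrix.mul_assoc C, Matrix.mul_nonsing_inv C hCdet, Matrix.one_mul,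
        ← Matrix.mul_assoc]
    have hX1 : S * C * S = 1 := by
      have hinv1 := Matrix.mul_nonsing_inv _ hXdet
      calc S * C * S = S * C * S * (S * C * S * (S * C * S)⁻¹) := by
            rw [hinv1, Matrix.mul_one]
        _ = S * C * S * (S * C * S) * (S * C * S)⁻¹ := by rw [← Matrix.mul_assoc]
        _ = S * C * S * (S * C * S)⁻¹ := by rw [hidem]
        _ = 1 := hinv1
    have key : (1 : Matrix (Fin n) (Fin n) ℝ) - C⁻¹ = S * (C - 1) * S := by
      rw [Matrix.mul_sub, Matrix.mul_one, Matrix.sub_mul, hX1, hSS]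
    show ((1 : Matrix (Fin n) (Fin n) ℝ) - C⁻¹).PosSemidef
    rw [key]
    have h1C' : (C - 1).PosSemidef := h1C
    have := h1C'.mul_mul_conjTranspose_same S
    rwa [conjTranspose_eq_transpose_of_trivial, hSt] at this
  -- transport back through `R⁻¹`
  have hNRC : N = R * C * R := by
    rw [hC, ← Matrix.mul_assoc, Matrix.mul_nonsing_inv_cancel_left R _ hRdet,
      Matrix.mul_assoc, Matrix.nonsing_inv_mul R hRdet, Matrix.mul_one]
  have hNinv : N⁻¹ = R⁻¹ * C⁻¹ * R⁻¹ := by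
    rw [hNRC, Matrix.mul_inv_rev, Matrix.mul_inv_rev, Matrix.mul_assoc]
  have hMinv : M⁻¹ = R⁻¹ * 1 * R⁻¹ := by
    rw [← hRR, Matrix.mul_inv_rev, Matrix.mul_one]
  have hdiff : M⁻¹ - N⁻¹ = R⁻¹ * (1 - C⁻¹) * R⁻¹ := by
    rw [hMinv, hNinv, Matrix.mul_sub, Matrix.sub_mul]
  show (M⁻¹ - N⁻¹).PosSemidef
  rw [hdiff]
  have hC1 : ((1 : Matrix (Fin n) (Fin n) ℝ) - C⁻¹).PosSemidef := hCinv
  have := hC1.mul_mul_conjTranspose_same R⁻¹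
  rwa [conjTranspose_eq_transpose_of_trivial, hRit] at this

end RiccatiAux

open RiccatiAux in
/-- **Riccati-type contraction inequality for the UKF Lyapunov argument.**  For `A`
nonsingular with `‖A‖ ≤ ā`, `Σ` symmetric positive definite with `Σ ⪯ σ̄ I`, and `Q̂`
symmetric with `Q̂ ⪰ q̂ I`, `q̂ > 0`, the matrix `Σ' = A Σ Aᵀ + Q̂` is positive definite
and, with `λ = q̂/(q̂ + ā² σ̄) ∈ (0,1)`, we have `Aᵀ (Σ')⁻¹ A ⪯ (1 − λ) Σ⁻¹`. -/
theorem riccati_contraction_inequality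
    {n : ℕ} (hn : 0 < n) (A Cov Qhat : Matrix (Fin n) (Fin n) ℝ) (abar qhat sbar : ℝ)
    (    hA : IsUnit A) (hAbound : specNorm A ≤ abar)
    (hCov : Cov.PosDef) (hCovbound : psdLE Cov (sbar • 1))
    (hQhatsym : Qhat.IsHermitian) (hQhat : psdLE (qhat • 1) Qhat) (hqhat : 0 < qhat) :
    (A * Cov * Aᵀ + Qhat).PosDef ∧
    0 < qhat / (qhat + abar ^ 2 * sbar) ∧ qhat / (qhat + abar ^ 2 * sbar) < 1 ∧
    psdLE (Aᵀ * (A * Cov * Aᵀ + Qhat)⁻¹ * A)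
      ((1 - qhat / (qhat + abar ^ 2 * sbar)) • Cov⁻¹) := by
  classical
  have hAdet : IsUnit A.det := (Matrix.isUnit_iff_isUnit_det A).mp hA
  have hAtdet : IsUnit Aᵀ.det := by rwa [Matrix.det_transpose]
  -- `abar > 0`
  have hA0 : A ≠ 0 := by
    intro h
    have : Nonempty (Fin n) := ⟨⟨0, hn⟩⟩
    rw [h, Matrix.det_zero] at hAdet
    exact not_isUnit_zero hAdet
  have hspec : 0 < specNorm A := specNorm_pos hA0
  have habar : 0 < abar := lt_of_lt_of_le hspec hAbound
  -- `sbar > 0`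
  have hsbar : 0 < sbar := by
    set e : Fin n → ℝ := Pi.single ⟨0, hn⟩ 1 with he_def
    have he : e ≠ 0 := by
      intro h
      have := congrFun h ⟨0, hn⟩
      simp [he_def] at this
    have hq1 : 0 < e ⬝ᵥ (Cov *ᵥ e) := by
      have := hCov.dotProduct_mulVec_pos he
      rwa [star_trivial] at this
    have hq2 : e ⬝ᵥ (Cov *ᵥ e) ≤ sbar * (e ⬝ᵥ e) := by
      have := quad_le_of_psdLE hCovbound e
      rwa [quad_smul_one] at this
    nlinarith [dot_self_nonneg e]
  set a2s := abar ^ 2 * sbar with ha2s_def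
  have ha2s : 0 < a2s := by positivity
  have hden : 0 < qhat + a2s := by positivity
  have hlam1 : 0 < qhat / (qhat + a2s) := div_pos hqhat hden
  have hlam2 : qhat / (qhat + a2s) < 1 := (div_lt_one hden).mpr (by linarith)
  have hc : 1 - qhat / (qhat + a2s) = a2s / (qhat + a2s) := by
    field_simp
    ring
  set S := A * Cov * Aᵀ with hS_def
  have hS_pd : S.PosDef := posdef_congr hCov hA
  have hSdet : IsUnit S.det := (Matrix.isUnit_iff_isUnit_det S).mp hS_pd.isUnit
  -- Qhat is psd
  have hQ_psd : Qhat.PosSemidef := by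
    have h1 : ((qhat : ℝ) • (1 : Matrix (Fin n) (Fin n) ℝ)).PosSemidef :=
      psd_smul hqhat.le Matrix.PosSemidef.one
    have h2 : (Qhat - qhat • 1).PosSemidef := hQhat
    have := h2.add h1
    rwa [sub_add_cancel] at this
  have hSig_pd : (S + Qhat).PosDef := hS_pd.add_posSemidef hQ_psd
  -- Step A : S ⪯ a2s • 1
  have hSa : psdLE S (a2s • 1) := by
    refine PosSemidef.of_dotProduct_mulVec_nonneg ?_ fun x => ?_
    · unfold Matrix.IsHermitian
      rw [conjTranspose_sub, conjTranspose_smul, conjTranspose_one, star_trivial,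
        hS_pd.1]
    · rw [star_trivial]
      have h1 : x ⬝ᵥ (S *ᵥ x) ≤ sbar * ((Aᵀ *ᵥ x) ⬝ᵥ (Aᵀ *ᵥ x)) := by
        rw [hS_def, quad_congr]
        have := quad_le_of_psdLE hCovbound (Aᵀ *ᵥ x)
        rwa [quad_smul_one] at this
      have h2 : (Aᵀ *ᵥ x) ⬝ᵥ (Aᵀ *ᵥ x) ≤ specNorm A ^ 2 * (x ⬝ᵥ x) :=
        quad_transpose_le A x
      have h3 : specNorm A ^ 2 * (x ⬝ᵥ x) ≤ abar ^ 2 * (x ⬝ᵥ x) := by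
        have : specNorm A ^ 2 ≤ abar ^ 2 :=
          pow_le_pow_left₀ hspec.le hAbound 2
        exact mul_le_mul_of_nonneg_right this (dot_self_nonneg x)
      have h4 : x ⬝ᵥ (S *ᵥ x) ≤ a2s * (x ⬝ᵥ x) := by
        calc x ⬝ᵥ (S *ᵥ x) ≤ sbar * ((Aᵀ *ᵥ x) ⬝ᵥ (Aᵀ *ᵥ x)) := h1
          _ ≤ sbar * (abar ^ 2 * (x ⬝ᵥ x)) :=
              mul_le_mul_of_nonneg_left (le_trans h2 h3) hsbar.le
          _ = a2s * (x ⬝ᵥ x) := by ring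
      have h5 : x ⬝ᵥ ((a2s • (1 : Matrix (Fin n) (Fin n) ℝ)) *ᵥ x) = a2s * (x ⬝ᵥ x) :=
        quad_smul_one a2s x
      rw [sub_mulVec, dotProduct_sub, h5]
      linarith
  -- Step B : ((qhat+a2s)/a2s) • S ⪯ S + Qhat
  have hkey : psdLE (((qhat + a2s) / a2s) • S) (S + Qhat) := by
    have hEq : S + Qhat - ((qhat + a2s) / a2s) • S
        = (Qhat - qhat • 1) + ((qhat / a2s) • (a2s • (1 : Matrix (Fin n) (Fin n) ℝ) - S)) := by
      have h1 : (qhat / a2s) • (a2s • (1 : Matrix (Fin n) (Fin n) ℝ)) = qhat • 1 := by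
        rw [smul_smul, div_mul_cancel₀ _ ha2s.ne']
      have h2 : (qhat + a2s) / a2s = qhat / a2s + 1 := by field_simp
      rw [h2, add_smul, one_smul, smul_sub, h1]
      abel
    show (S + Qhat - ((qhat + a2s) / a2s) • S).PosSemidef
    rw [hEq]
    have hQ' : (Qhat - qhat • 1).PosSemidef := hQhat
    exact hQ'.add (psd_smul (div_nonneg hqhat.le ha2s.le) hSa)
  have hPD1 : (((qhat + a2s) / a2s) • S).PosDef :=
    posdef_smul (div_pos hden ha2s) hS_pd
  have hinv := psdLE_inv hPD1 hSig_pd hkey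
  -- compute the inverse of the scaled matrix
  have hval : ((qhat + a2s) / a2s) ≠ 0 := by positivity
  haveI : Invertible ((qhat + a2s) / a2s) := invertibleOfNonzero hval
  have hsm : (((qhat + a2s) / a2s) • S)⁻¹ = (a2s / (qhat + a2s)) • S⁻¹ := by
    rw [Matrix.inv_smul (A := S) (k := (qhat + a2s) / a2s) hSdet, invOf_eq_right_inv (mul_inv_cancel₀ hval), inv_div]
  rw [hsm] at hinv
  -- congruence with Aᵀ
  have hfin := psdLE_congr hinv Aᵀ
  rw [transpose_transpose] at hfin
  -- simplify the right-hand side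
  have hSinv : S⁻¹ = Aᵀ⁻¹ * Cov⁻¹ * A⁻¹ := by
    rw [hS_def, Matrix.mul_inv_rev, Matrix.mul_inv_rev, Matrix.mul_assoc]
  have hRHS : Aᵀ * ((a2s / (qhat + a2s)) • S⁻¹) * A
      = (a2s / (qhat + a2s)) • Cov⁻¹ := by
    rw [Matrix.mul_smul, Matrix.smul_mul, hSinv]
    congr 1
    rw [← Matrix.mul_assoc, ← Matrix.mul_assoc, Matrix.mul_nonsing_inv Aᵀ hAtdet,
      Matrix.one_mul, Matrix.mul_assoc, Matrix.nonsing_inv_mul A hAdet, Matrix.mul_one]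
  rw [hRHS] at hfin
  refine ⟨hSig_pd, hlam1, hlam2, ?_⟩
  rw [hc]
  exact hfin
end
end

section
/- Boundedness of the UKF predicted mean and predicted covariance under bounded dynamics (condition C6, time update). Suppose κ > 0 (so all sigma-point weights are positive), f : ℝⁿ → ℝⁿ satisfies ‖f(x)‖₂ ≤ δ_f for all x, and Q ⪯ q̄·I is a symmetric positive semidefinite process-noise covariance. Let x̃₀,…,x̃_{2n} with weights ω₀,…,ω_{2n} be the sigma points generated from any estimate x̂ and any positive semidefinite covariance Σ with factor √Σ. Then the UKF predicted mean x̂' = Σ_{i=0}^{2n} ωᵢ·f(x̃ᵢ) satisfies ‖x̂'‖₂ ≤ δ_f, and the predicted covariance Σ' = Σ_{i=0}^{2n} ωᵢ·f(x̃ᵢ)f(x̃ᵢ)ᵀ − x̂'(x̂')ᵀ + Q satisfies 0 ⪯ Σ' ⪯ (δ_f² + q̄)·I. -/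
open Matrix Finset

noncomputable section

/-- Euclidean (`l₂`) norm of a vector in `ℝⁿ`. -/
def norm2 {n : ℕ} (x : Fin n → ℝ) : ℝ := Real.sqrt (∑ j, x j ^ 2)

/-- UKF sigma-point weights: `ω₀ = κ/(n+κ)` and `ωᵢ = 1/(2(n+κ))` for `i = 1, …, 2n`. -/
def ukfWeight (n : ℕ) (κ : ℝ) : ℕ → ℝ :=
  fun i => if i = 0 then κ / ((n : ℝ) + κ) else 1 / (2 * ((n : ℝ) + κ))

/-- UKF sigma points generated from the estimate `xhat`, a square-root factor `S` of the
covariance (so `Σ = S * Sᵀ`), and scaling parameter `κ`: `x̃₀ = x̂`,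
`x̃ᵢ = x̂ + [√((n+κ)Σ)]_{(:,i)}` for `i = 1, …, n` and
`x̃_{n+i} = x̂ − [√((n+κ)Σ)]_{(:,i)}` for `i = 1, …, n`, where
`√((n+κ)Σ) = √(n+κ) • S` is the corresponding factor of `(n+κ)Σ`. -/
def ukfSigma {n : ℕ} (xhat : Fin n → ℝ) (S : Matrix (Fin n) (Fin n) ℝ) (κ : ℝ) :
    ℕ → (Fin n → ℝ) := fun i =>
  if h1 : 1 ≤ i ∧ i ≤ n then
    xhat + Real.sqrt ((n : ℝ) + κ) • (fun j => S j ⟨i - 1, by omega⟩)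
  else if h2 : n + 1 ≤ i ∧ i ≤ 2 * n then
    xhat - Real.sqrt ((n : ℝ) + κ) • (fun j => S j ⟨i - n - 1, by omega⟩)
  else xhat

lemma quad_vecMulVec {n : ℕ} (a v : Fin n → ℝ) :
    v ⬝ᵥ (Matrix.vecMulVec a a) *ᵥ v = (a ⬝ᵥ v) ^ 2 := by
  simp only [Matrix.mulVec, Matrix.vecMulVec_apply, dotProduct, sq, Finset.sum_mul,
    Finset.mul_sum]
  rw [Finset.sum_comm]
  exact Finset.sum_congr rfl fun j _ => Finset.sum_congr rfl fun k _ => by ring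

lemma quad_sum {n : ℕ} (s : Finset ℕ) (M : ℕ → Matrix (Fin n) (Fin n) ℝ) (v : Fin n → ℝ) :
    v ⬝ᵥ (∑ i ∈ s, M i) *ᵥ v = ∑ i ∈ s, v ⬝ᵥ (M i) *ᵥ v := by
  induction s using Finset.induction_on with
  | empty => simp [Matrix.mulVec]
  | insert _ _ h ih => rw [Finset.sum_insert h, Finset.sum_insert h, Matrix.add_mulVec,
      dotProduct_add, ih]

lemma jensen_sq {s : Finset ℕ} {w c : ℕ → ℝ} (hw : ∀ i ∈ s, 0 ≤ w i)
    (hsum : ∑ i ∈ s, w i = 1) :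
    (∑ i ∈ s, w i * c i) ^ 2 ≤ ∑ i ∈ s, w i * c i ^ 2 := by
  have h := Finset.sum_mul_sq_le_sq_mul_sq s (fun i => Real.sqrt (w i))
    (fun i => Real.sqrt (w i) * c i)
  have e1 : ∀ i ∈ s, Real.sqrt (w i) * (Real.sqrt (w i) * c i) = w i * c i := fun i hi => by
    rw [← mul_assoc, Real.mul_self_sqrt (hw i hi)]
  have e2 : ∀ i ∈ s, Real.sqrt (w i) ^ 2 = w i := fun i hi => Real.sq_sqrt (hw i hi)
  have e3 : ∀ i ∈ s, (Real.sqrt (w i) * c i) ^ 2 = w i * c i ^ 2 := fun i hi => by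
    rw [mul_pow, e2 i hi]
  rw [Finset.sum_congr rfl e1, Finset.sum_congr rfl e2, Finset.sum_congr rfl e3, hsum,
    one_mul] at h
  exact h

lemma herm_vecMulVec {n : ℕ} (a : Fin n → ℝ) : (Matrix.vecMulVec a a).IsHermitian := by
  show _ᴴ = _
  ext i j
  simp [Matrix.conjTranspose_apply, Matrix.vecMulVec_apply, mul_comm]


/-- **Boundedness of the UKF predicted mean and predicted covariance under bounded dynamics
(condition C6, time update).**  If `κ > 0` (so all sigma-point weights are positive),
`‖f(x)‖₂ ≤ δ_f` for all `x`, and `Q ⪯ q̄ I` is positive semidefinite, then for sigma points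
generated from any estimate `x̂` and any positive semidefinite `Σ = S Sᵀ`, the predicted
mean `x̂' = ∑ᵢ ωᵢ f(x̃ᵢ)` satisfies `‖x̂'‖₂ ≤ δ_f` and the predicted covariance
`Σ' = ∑ᵢ ωᵢ f(x̃ᵢ) f(x̃ᵢ)ᵀ − x̂' x̂'ᵀ + Q` satisfies `0 ⪯ Σ' ⪯ (δ_f² + q̄) I`. -/
theorem UKF_time_update_bounded
    {n : ℕ} (f : (Fin n → ℝ) → (Fin n → ℝ)) (δf qbar κ : ℝ)
    (xhat xp : Fin n → ℝ) (Cov S Q Covp : Matrix (Fin n) (Fin n) ℝ)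
    (hκ : 0 < κ)
    (hf : ∀ x, norm2 (f x) ≤ δf)
    (hQ : Q.PosSemidef) (hQbar : psdLE Q (qbar • 1))
    (hCov : Cov.PosSemidef) (hfac : Cov = S * Sᵀ)
    (hxp : xp = ∑ i ∈ Finset.range (2 * n + 1), ukfWeight n κ i • f (ukfSigma xhat S κ i))
    (hCovp : Covp = (∑ i ∈ Finset.range (2 * n + 1),
        ukfWeight n κ i • vecMulVec (f (ukfSigma xhat S κ i)) (f (ukfSigma xhat S κ i)))
      - vecMulVec xp xp + Q) :
    norm2 xp ≤ δf ∧ Covp.PosSemidef ∧ psdLE Covp ((δf ^ 2 + qbar) • 1) := by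
  have hnκ : 0 < (n : ℝ) + κ := by positivity
  set s := Finset.range (2 * n + 1) with hs_def
  set w : ℕ → ℝ := ukfWeight n κ with hw_def
  set y : ℕ → (Fin n → ℝ) := fun i => f (ukfSigma xhat S κ i) with hy_def
  have hw : ∀ i, 0 ≤ w i := by
    intro i
    by_cases h : i = 0
    · simp only [hw_def, ukfWeight, if_pos h]; positivity
    · simp only [hw_def, ukfWeight, if_neg h]; positivity
  have hwsum : ∑ i ∈ s, w i = 1 := by
    have h1 : ∀ i, w (i + 1) = 1 / (2 * ((n : ℝ) + κ)) := fun i => by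
      simp [hw_def, ukfWeight]
    rw [hs_def, Finset.sum_range_succ', Finset.sum_congr rfl (fun i _ => h1 i),
      Finset.sum_const, Finset.card_range]
    have h0 : w 0 = κ / ((n : ℝ) + κ) := by simp [hw_def, ukfWeight]
    rw [h0]
    rw [nsmul_eq_mul]
    push_cast
    trans ((n:ℝ)+κ)/(n+κ)
    · rw [one_div, mul_inv]
      ring
    · exact div_self hnκ.ne'
  have hδ0 : 0 ≤ δf := le_trans (Real.sqrt_nonneg _) (hf 0)
  have hy2 : ∀ i, ∑ j, y i j ^ 2 ≤ δf ^ 2 := by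
    intro i
    have h2 : 0 ≤ ∑ j, y i j ^ 2 := Finset.sum_nonneg fun j _ => sq_nonneg _
    calc ∑ j, y i j ^ 2 = norm2 (y i) ^ 2 := by rw [norm2, Real.sq_sqrt h2]
    _ ≤ δf ^ 2 := pow_le_pow_left₀ (Real.sqrt_nonneg _) (hf _) 2
  -- componentwise expansion of xp
  have hxpj : ∀ j, xp j = ∑ i ∈ s, w i * y i j := by
    intro j
    rw [hxp]
    simp [Finset.sum_apply]
    rfl
  -- mean bound
  have hxpsq : ∑ j, xp j ^ 2 ≤ δf ^ 2 := by
    have h1 : ∀ j, xp j ^ 2 ≤ ∑ i ∈ s, w i * y i j ^ 2 := fun j => by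
      rw [hxpj j]; exact jensen_sq (fun i _ => hw i) hwsum
    calc ∑ j, xp j ^ 2 ≤ ∑ j, ∑ i ∈ s, w i * y i j ^ 2 :=
          Finset.sum_le_sum fun j _ => h1 j
    _ = ∑ i ∈ s, w i * ∑ j, y i j ^ 2 := by
          rw [Finset.sum_comm]
          exact Finset.sum_congr rfl fun i _ => by rw [Finset.mul_sum]
    _ ≤ ∑ i ∈ s, w i * δf ^ 2 :=
          Finset.sum_le_sum fun i _ => mul_le_mul_of_nonneg_left (hy2 i) (hw i)
    _ = δf ^ 2 := by rw [← Finset.sum_mul, hwsum, one_mul]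
  have hmean : norm2 xp ≤ δf := by
    rw [norm2]
    calc Real.sqrt (∑ j, xp j ^ 2) ≤ Real.sqrt (δf ^ 2) := Real.sqrt_le_sqrt hxpsq
    _ = δf := Real.sqrt_sq hδ0
  -- dot product expansion
  have hxpd : ∀ v, xp ⬝ᵥ v = ∑ i ∈ s, w i * (y i ⬝ᵥ v) := by
    intro v
    rw [dotProduct, Finset.sum_congr rfl fun j (_ : j ∈ Finset.univ) => by
      rw [hxpj j, Finset.sum_mul], Finset.sum_comm]
    refine Finset.sum_congr rfl fun i _ => ?_
    rw [dotProduct, Finset.mul_sum]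
    exact Finset.sum_congr rfl fun j _ => by ring
  -- quadratic form of Covp
  have hquad : ∀ v : Fin n → ℝ, v ⬝ᵥ Covp *ᵥ v =
      (∑ i ∈ s, w i * (y i ⬝ᵥ v) ^ 2) - (xp ⬝ᵥ v) ^ 2 + v ⬝ᵥ Q *ᵥ v := by
    intro v
    rw [hCovp, Matrix.add_mulVec, Matrix.sub_mulVec, dotProduct_add, dotProduct_sub,
      quad_sum, quad_vecMulVec]
    congr 1
    congr 1
    exact Finset.sum_congr rfl fun i _ => by
      rw [Matrix.smul_mulVec, dotProduct_smul, quad_vecMulVec, smul_eq_mul]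
  -- hermitian parts
  have hherm_sum : (∑ i ∈ s, w i • vecMulVec (y i) (y i)).IsHermitian := by
    show _ᴴ = _
    rw [Matrix.conjTranspose_sum]
    exact Finset.sum_congr rfl fun i _ => by
      rw [Matrix.conjTranspose_smul, herm_vecMulVec, star_trivial]
  have hherm : Covp.IsHermitian := by
    rw [hCovp]
    exact (hherm_sum.sub (herm_vecMulVec xp)).add hQ.1
  -- PSD of Covp
  have hpsd : Covp.PosSemidef := by
    refine Matrix.PosSemidef.of_dotProduct_mulVec_nonneg hherm fun v => ?_
    rw [star_trivial, hquad v, hxpd v]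
    have hjen : (∑ i ∈ s, w i * (y i ⬝ᵥ v)) ^ 2 ≤ ∑ i ∈ s, w i * (y i ⬝ᵥ v) ^ 2 :=
      jensen_sq (fun i _ => hw i) hwsum
    have hQv : 0 ≤ v ⬝ᵥ Q *ᵥ v := by simpa [star_trivial] using hQ.dotProduct_mulVec_nonneg v
    linarith
  -- quadratic form of c • 1
  have hquad1 : ∀ (c : ℝ) (v : Fin n → ℝ), v ⬝ᵥ (c • (1 : Matrix (Fin n) (Fin n) ℝ)) *ᵥ v
      = c * ∑ j, v j ^ 2 := by
    intro c v
    rw [Matrix.smul_mulVec, Matrix.one_mulVec, dotProduct_smul, smul_eq_mul]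
    congr 1
    simp [dotProduct, sq]
  -- Q upper bound
  have hQub : ∀ v : Fin n → ℝ, v ⬝ᵥ Q *ᵥ v ≤ qbar * ∑ j, v j ^ 2 := by
    intro v
    have h := Matrix.PosSemidef.dotProduct_mulVec_nonneg hQbar v
    rw [star_trivial, Matrix.sub_mulVec, dotProduct_sub, hquad1] at h
    linarith
  -- Cauchy-Schwarz per sigma point
  have hCS : ∀ i (v : Fin n → ℝ), (y i ⬝ᵥ v) ^ 2 ≤ δf ^ 2 * ∑ j, v j ^ 2 := by
    intro i v
    have h := Finset.sum_mul_sq_le_sq_mul_sq Finset.univ (y i) v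
    calc (y i ⬝ᵥ v) ^ 2 = (∑ j, y i j * v j) ^ 2 := by rw [dotProduct]
    _ ≤ (∑ j, y i j ^ 2) * ∑ j, v j ^ 2 := h
    _ ≤ δf ^ 2 * ∑ j, v j ^ 2 :=
        mul_le_mul_of_nonneg_right (hy2 i) (Finset.sum_nonneg fun j _ => sq_nonneg _)
  -- upper bound
  have hub : psdLE Covp ((δf ^ 2 + qbar) • 1) := by
    have hherm1 : ((δf ^ 2 + qbar) • (1 : Matrix (Fin n) (Fin n) ℝ)).IsHermitian := by
      show _ᴴ = _
      rw [Matrix.conjTranspose_smul, Matrix.conjTranspose_one, star_trivial]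
    refine Matrix.PosSemidef.of_dotProduct_mulVec_nonneg (hherm1.sub hherm) fun v => ?_
    rw [star_trivial, Matrix.sub_mulVec, dotProduct_sub, hquad1, hquad v]
    have h1 : ∑ i ∈ s, w i * (y i ⬝ᵥ v) ^ 2 ≤ δf ^ 2 * ∑ j, v j ^ 2 := by
        calc ∑ i ∈ s, w i * (y i ⬝ᵥ v) ^ 2
            ≤ ∑ i ∈ s, w i * (δf ^ 2 * ∑ j, v j ^ 2) :=
              Finset.sum_le_sum fun i _ => mul_le_mul_of_nonneg_left (hCS i v) (hw i)
        _ = δf ^ 2 * ∑ j, v j ^ 2 := by rw [← Finset.sum_mul, hwsum, one_mul]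
    have h2 := hQub v
    have h3 : 0 ≤ (xp ⬝ᵥ v) ^ 2 := sq_nonneg _
    linarith
  exact ⟨hmean, hpsd, hub⟩
end
end

section
/- Boundedness of the UKF measurement-update statistics under bounded measurement function (condition C6, measurement update). Suppose κ > 0 (so all sigma-point weights are positive), h : ℝ^{n_x} → ℝ^{n_y} satisfies ‖h(x)‖₂ ≤ δ_h for all x, and R ⪯ r̄·I is a symmetric positive semidefinite measurement-noise covariance. Let q₀,…,q_{2n_x} with weights ω₀,…,ω_{2n_x} be the sigma points generated from a predicted estimate x̂ and a positive semidefinite predicted covariance Σ with ‖Σ‖ ≤ σ̄. Then the predicted measurement ŷ = Σ_{i=0}^{2n_x} ωᵢ·h(qᵢ) satisfies ‖ŷ‖₂ ≤ δ_h; the innovation covariance estimate Σ^y = Σ_{i=0}^{2n_x} ωᵢ·h(qᵢ)h(qᵢ)ᵀ − ŷŷᵀ + R satisfies 0 ⪯ Σ^y ⪯ (δ_h² + r̄)·I; and the cross-covariance estimate Σ^{xy} = Σ_{i=0}^{2n_x} ωᵢ·qᵢ h(qᵢ)ᵀ − x̂ŷᵀ = Σ_{i=0}^{2n_x} ωᵢ·(qᵢ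 − x̂)(h(qᵢ) − ŷ)ᵀ satisfies ‖Σ^{xy}‖ ≤ 2·δ_h·√((n_x + κ)·σ̄). -/
open Matrix Finset

noncomputable section

/- ## Auxiliary lemmas -/

lemma norm2_eq {n : ℕ} (x : Fin n → ℝ) :
    norm2 x = ‖(WithLp.equiv 2 (Fin n → ℝ)).symm x‖ := by
  rw [EuclideanSpace.norm_eq]
  simp [norm2, Real.norm_eq_abs, sq_abs]

lemma norm2_nonneg {n : ℕ} (x : Fin n → ℝ) : 0 ≤ norm2 x := Real.sqrt_nonneg _

lemma sq_norm2 {n : ℕ} (x : Fin n → ℝ) : norm2 x ^ 2 = x ⬝ᵥ x := by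
  rw [norm2, Real.sq_sqrt (by positivity)]
  simp [dotProduct, sq]

lemma norm2_smul {n : ℕ} (c : ℝ) (x : Fin n → ℝ) : norm2 (c • x) = |c| * norm2 x := by
  rw [norm2_eq, norm2_eq]
  have : (WithLp.equiv 2 (Fin n → ℝ)).symm (c • x) = c • (WithLp.equiv 2 (Fin n → ℝ)).symm x := rfl
  rw [this, norm_smul, Real.norm_eq_abs]

lemma norm2_neg {n : ℕ} (x : Fin n → ℝ) : norm2 (-x) = norm2 x := by
  have := norm2_smul (-1 : ℝ) x
  simpa using this

lemma norm2_zero {n : ℕ} : norm2 (0 : Fin n → ℝ) = 0 := by simp [norm2]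

lemma norm2_sub_le {n : ℕ} (a b : Fin n → ℝ) : norm2 (a - b) ≤ norm2 a + norm2 b := by
  rw [norm2_eq, norm2_eq, norm2_eq]
  exact norm_sub_le _ _

lemma dot_le_norm2 {n : ℕ} (a b : Fin n → ℝ) : a ⬝ᵥ b ≤ norm2 a * norm2 b := by
  have h := Finset.sum_mul_sq_le_sq_mul_sq Finset.univ a b
  have h2 : (a ⬝ᵥ b) ^ 2 ≤ (norm2 a * norm2 b) ^ 2 := by
    rw [mul_pow, sq_norm2, sq_norm2]
    simpa [dotProduct, sq] using h
  have hnn : 0 ≤ norm2 a * norm2 b := mul_nonneg (norm2_nonneg a) (norm2_nonneg b)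
  nlinarith [sq_nonneg (a ⬝ᵥ b - norm2 a * norm2 b), sq_nonneg (a ⬝ᵥ b + norm2 a * norm2 b)]

lemma abs_dot_le {n : ℕ} (a b : Fin n → ℝ) : |a ⬝ᵥ b| ≤ norm2 a * norm2 b := by
  rcases abs_cases (a ⬝ᵥ b) with ⟨h, _⟩ | ⟨h, _⟩
  · rw [h]; exact dot_le_norm2 a b
  · rw [h]
    have h2 : (-a) ⬝ᵥ b ≤ norm2 (-a) * norm2 b := dot_le_norm2 (-a) b
    simpa [norm2_neg] using h2

lemma norm2_mulVec_le {m n : ℕ} (A : Matrix (Fin m) (Fin n) ℝ) (v : Fin n → ℝ) :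
    norm2 (A *ᵥ v) ≤ specNorm A * norm2 v := by
  rw [norm2_eq, norm2_eq]
  have h := (LinearMap.toContinuousLinearMap (Matrix.toEuclideanLin A)).le_opNorm
      ((WithLp.equiv 2 (Fin n → ℝ)).symm v)
  simpa [specNorm] using h

lemma specNorm_nonneg {m n : ℕ} (A : Matrix (Fin m) (Fin n) ℝ) : 0 ≤ specNorm A :=
  norm_nonneg _

lemma specNorm_le_bound {m n : ℕ} (A : Matrix (Fin m) (Fin n) ℝ) (c : ℝ) (hc : 0 ≤ c)
    (h : ∀ v, norm2 (A *ᵥ v) ≤ c * norm2 v) : specNorm A ≤ c := by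
  refine ContinuousLinearMap.opNorm_le_bound _ hc fun x => ?_
  have h2 := h ((WithLp.equiv 2 (Fin n → ℝ)) x)
  rw [norm2_eq, norm2_eq] at h2
  simp at h2
  exact h2

lemma specNorm_sum_le {m n : ℕ} (s : Finset ℕ) (M : ℕ → Matrix (Fin m) (Fin n) ℝ) :
    specNorm (∑ i ∈ s, M i) ≤ ∑ i ∈ s, specNorm (M i) := by
  unfold specNorm
  rw [map_sum, map_sum]
  exact norm_sum_le _ _

lemma specNorm_smul {m n : ℕ} (c : ℝ) (A : Matrix (Fin m) (Fin n) ℝ) :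
    specNorm (c • A) = |c| * specNorm A := by
  unfold specNorm
  rw [_root_.map_smul, _root_.map_smul,
    norm_smul c (LinearMap.toContinuousLinearMap (toEuclideanLin A)), Real.norm_eq_abs]

lemma vecMulVec_mulVec' {m n : ℕ} (a : Fin m → ℝ) (b v : Fin n → ℝ) :
    vecMulVec a b *ᵥ v = (b ⬝ᵥ v) • a := by
  ext i
  simp only [vecMulVec, mulVec, dotProduct, Matrix.of_apply, Pi.smul_apply, smul_eq_mul,
    Finset.sum_mul]
  rw [Finset.sum_congr rfl]
  intro j _
  ring

lemma specNorm_vecMulVec_le {m n : ℕ} (a : Fin m → ℝ) (b : Fin n → ℝ) :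
    specNorm (vecMulVec a b) ≤ norm2 a * norm2 b := by
  refine specNorm_le_bound _ _ (mul_nonneg (norm2_nonneg a) (norm2_nonneg b)) fun v => ?_
  rw [vecMulVec_mulVec', norm2_smul]
  calc |b ⬝ᵥ v| * norm2 a ≤ (norm2 b * norm2 v) * norm2 a :=
        mul_le_mul_of_nonneg_right (abs_dot_le b v) (norm2_nonneg a)
    _ = norm2 a * norm2 b * norm2 v := by ring

lemma sum_mulVec' {m n : ℕ} (s : Finset ℕ) (M : ℕ → Matrix (Fin m) (Fin n) ℝ) (x : Fin n → ℝ) :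
    (∑ k ∈ s, M k) *ᵥ x = ∑ k ∈ s, (M k *ᵥ x) := by
  ext i
  simp only [mulVec, dotProduct, Finset.sum_apply, Matrix.sum_apply, Finset.sum_mul]
  exact Finset.sum_comm

lemma dotProduct_sum' {n : ℕ} (s : Finset ℕ) (x : Fin n → ℝ) (v : ℕ → Fin n → ℝ) :
    x ⬝ᵥ (∑ k ∈ s, v k) = ∑ k ∈ s, x ⬝ᵥ v k := by
  simp only [dotProduct, Finset.sum_apply, Finset.mul_sum]
  exact Finset.sum_comm

lemma isHermitian_of_symm {n : ℕ} (A : Matrix (Fin n) (Fin n) ℝ) (h : ∀ i j, A j i = A i j) :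
    A.IsHermitian := by
  show Aᴴ = A
  ext i j
  simp only [conjTranspose_apply, star_trivial]
  exact h i j

lemma norm2_col_le {n : ℕ} (S : Matrix (Fin n) (Fin n) ℝ) (sbar : ℝ)
    (hb : specNorm (S * Sᵀ) ≤ sbar) (i : Fin n) :
    norm2 (fun j => S j i) ≤ Real.sqrt sbar := by
  have hs0 : 0 ≤ sbar := le_trans (specNorm_nonneg _) hb
  set col : Fin n → ℝ := fun j => S j i with hcol
  have hc0 : 0 ≤ norm2 col := norm2_nonneg _
  have hA : norm2 (Sᵀ *ᵥ col) ≤ Real.sqrt sbar * norm2 col := by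
    have h1 : (Sᵀ *ᵥ col) ⬝ᵥ (Sᵀ *ᵥ col) = col ⬝ᵥ ((S * Sᵀ) *ᵥ col) := by
      rw [← mulVec_mulVec, dotProduct_mulVec col S, ← vecMul_transpose, transpose_transpose]
    have h2 : col ⬝ᵥ ((S * Sᵀ) *ᵥ col) ≤ norm2 col * (sbar * norm2 col) := by
      calc col ⬝ᵥ ((S * Sᵀ) *ᵥ col) ≤ norm2 col * norm2 ((S * Sᵀ) *ᵥ col) :=
            dot_le_norm2 _ _
        _ ≤ norm2 col * (sbar * norm2 col) := by
            refine mul_le_mul_of_nonneg_left ?_ hc0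
            calc norm2 ((S * Sᵀ) *ᵥ col) ≤ specNorm (S * Sᵀ) * norm2 col :=
                  norm2_mulVec_le _ _
              _ ≤ sbar * norm2 col := mul_le_mul_of_nonneg_right hb hc0
    have h3 : norm2 (Sᵀ *ᵥ col) ^ 2 ≤ sbar * norm2 col ^ 2 := by
      rw [sq_norm2, h1]
      calc col ⬝ᵥ ((S * Sᵀ) *ᵥ col) ≤ norm2 col * (sbar * norm2 col) := h2
        _ = sbar * norm2 col ^ 2 := by ring
    calc norm2 (Sᵀ *ᵥ col) = Real.sqrt (norm2 (Sᵀ *ᵥ col) ^ 2) :=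
          (Real.sqrt_sq (norm2_nonneg _)).symm
      _ ≤ Real.sqrt (sbar * norm2 col ^ 2) := Real.sqrt_le_sqrt h3
      _ = Real.sqrt sbar * norm2 col := by
          rw [Real.sqrt_mul hs0, Real.sqrt_sq hc0]
  have hB : norm2 col ^ 2 ≤ norm2 (Sᵀ *ᵥ col) := by
    have hcolS : col = S *ᵥ Pi.single i 1 := by
      rw [Matrix.mulVec_single_one]
      rfl
    have h1 : norm2 col ^ 2 = Pi.single i 1 ⬝ᵥ (Sᵀ *ᵥ col) := by
      rw [sq_norm2]
      nth_rewrite 1 [hcolS]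
      rw [dotProduct_comm, dotProduct_mulVec, ← Matrix.mulVec_transpose]
      exact dotProduct_comm _ _
    have hsingle : norm2 (Pi.single i (1:ℝ)) = 1 := by
      have : ∑ j, (Pi.single i (1:ℝ)) j ^ 2 = (1:ℝ) := by
        simp [Pi.single_apply]
      rw [norm2, this, Real.sqrt_one]
    calc norm2 col ^ 2 = Pi.single i 1 ⬝ᵥ (Sᵀ *ᵥ col) := h1
      _ ≤ norm2 (Pi.single i (1:ℝ)) * norm2 (Sᵀ *ᵥ col) := dot_le_norm2 _ _
      _ = norm2 (Sᵀ *ᵥ col) := by rw [hsingle, one_mul]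
  have hkey : norm2 col ^ 2 ≤ Real.sqrt sbar * norm2 col := le_trans hB hA
  rcases eq_or_lt_of_le hc0 with h0 | hpos
  · rw [← h0]; exact Real.sqrt_nonneg _
  · exact le_of_mul_le_mul_right
      (by calc norm2 col * norm2 col = norm2 col ^ 2 := (sq _).symm
            _ ≤ Real.sqrt sbar * norm2 col := hkey) hpos

lemma norm2_weighted_sum_le {n : ℕ} (s : Finset ℕ) (ω : ℕ → ℝ) (v : ℕ → Fin n → ℝ) (c : ℝ)
    (hω : ∀ i ∈ s, 0 ≤ ω i) (hsum : ∑ i ∈ s, ω i = 1) (hv : ∀ i ∈ s, norm2 (v i) ≤ c) :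
    norm2 (∑ i ∈ s, ω i • v i) ≤ c := by
  rw [norm2_eq]
  have hrw : (WithLp.equiv 2 (Fin n → ℝ)).symm (∑ i ∈ s, ω i • v i)
      = ∑ i ∈ s, ω i • (WithLp.equiv 2 (Fin n → ℝ)).symm (v i) := by simp
  rw [hrw]
  calc ‖∑ i ∈ s, ω i • (WithLp.equiv 2 (Fin n → ℝ)).symm (v i)‖
      ≤ ∑ i ∈ s, ‖ω i • (WithLp.equiv 2 (Fin n → ℝ)).symm (v i)‖ := norm_sum_le _ _
    _ ≤ ∑ i ∈ s, ω i * c := by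
        refine Finset.sum_le_sum fun i hi => ?_
        rw [norm_smul, Real.norm_eq_abs, abs_of_nonneg (hω i hi)]
        exact mul_le_mul_of_nonneg_left (by rw [← norm2_eq]; exact hv i hi) (hω i hi)
    _ = c := by rw [← Finset.sum_mul, hsum, one_mul]

/-- **Boundedness of the UKF measurement-update statistics under a bounded measurement
function (condition C6, measurement update).**  If `κ > 0`, `‖h(x)‖₂ ≤ δ_h` for all `x`,
`R ⪯ r̄ I` is positive semidefinite, and `q₀, …, q_{2n_x}` are the sigma points generated
from a predicted estimate `x̂` and positive semidefinite predicted covariance `Σ = S Sᵀ`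
with `‖Σ‖ ≤ σ̄`, then the predicted measurement `ŷ = ∑ᵢ ωᵢ h(qᵢ)` satisfies `‖ŷ‖₂ ≤ δ_h`;
the innovation covariance estimate `Σ^y = ∑ᵢ ωᵢ h(qᵢ) h(qᵢ)ᵀ − ŷ ŷᵀ + R` satisfies
`0 ⪯ Σ^y ⪯ (δ_h² + r̄) I`; and the cross-covariance estimate
`Σ^{xy} = ∑ᵢ ωᵢ qᵢ h(qᵢ)ᵀ − x̂ ŷᵀ = ∑ᵢ ωᵢ (qᵢ − x̂)(h(qᵢ) − ŷ)ᵀ` satisfies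
`‖Σ^{xy}‖ ≤ 2 δ_h √((n_x + κ) σ̄)`. -/
theorem UKF_measurement_update_bounded
    {nx ny : ℕ} (h : (Fin nx → ℝ) → (Fin ny → ℝ)) (δh rbar sbar κ : ℝ)
    (xhat : Fin nx → ℝ) (yhat : Fin ny → ℝ)
    (Cov S : Matrix (Fin nx) (Fin nx) ℝ) (R Sy : Matrix (Fin ny) (Fin ny) ℝ)
    (Sxy : Matrix (Fin nx) (Fin ny) ℝ)
    (hκ : 0 < κ)
    (hh : ∀ x, norm2 (h x) ≤ δh)
    (hR : R.PosSemidef) (hRbar : psdLE R (rbar • 1))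
    (hCov : Cov.PosSemidef) (hfac : Cov = S * Sᵀ) (hCovbound : specNorm Cov ≤ sbar)
    (hyhat : yhat = ∑ i ∈ Finset.range (2 * nx + 1),
        ukfWeight nx κ i • h (ukfSigma xhat S κ i))
    (hSy : Sy = (∑ i ∈ Finset.range (2 * nx + 1),
        ukfWeight nx κ i • vecMulVec (h (ukfSigma xhat S κ i)) (h (ukfSigma xhat S κ i)))
      - vecMulVec yhat yhat + R)
    (hSxy : Sxy = (∑ i ∈ Finset.range (2 * nx + 1),
        ukfWeight nx κ i • vecMulVec (ukfSigma xhat S κ i) (h (ukfSigma xhat S κ i)))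
      - vecMulVec xhat yhat) :
    norm2 yhat ≤ δh ∧
    Sy.PosSemidef ∧ psdLE Sy ((δh ^ 2 + rbar) • 1) ∧
    Sxy = ∑ i ∈ Finset.range (2 * nx + 1),
        ukfWeight nx κ i • vecMulVec (ukfSigma xhat S κ i - xhat)
          (h (ukfSigma xhat S κ i) - yhat) ∧
    specNorm Sxy ≤ 2 * δh * Real.sqrt (((nx : ℝ) + κ) * sbar) := by
  have hnκ : (0:ℝ) < (nx:ℝ) + κ := by positivity
  set ω := ukfWeight nx κ with hω
  set q := ukfSigma xhat S κ with hqdef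
  set hv : ℕ → Fin ny → ℝ := fun i => h (q i) with hvdef
  set s := Real.sqrt ((nx:ℝ) + κ) with hsdef
  set d : ℝ := 1 / (2 * ((nx:ℝ) + κ)) with hd
  have hδ0 : 0 ≤ δh := le_trans (norm2_nonneg _) (hh 0)
  have hsbar0 : 0 ≤ sbar := le_trans (specNorm_nonneg _) hCovbound
  have hCov' : specNorm (S * Sᵀ) ≤ sbar := by rw [← hfac]; exact hCovbound
  have hω0 : ω 0 = κ / ((nx:ℝ) + κ) := by simp [hω, ukfWeight]
  have hωs : ∀ i : ℕ, ω (i+1) = d := by intro i; simp [hω, ukfWeight, hd]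
  have hωnn : ∀ i, 0 ≤ ω i := by
    intro i
    rcases Nat.eq_zero_or_pos i with rfl | hi
    · rw [hω0]; positivity
    · obtain ⟨k, rfl⟩ : ∃ k, i = k + 1 := ⟨i - 1, by omega⟩
      rw [hωs]; positivity
  have hq0 : q 0 = xhat := by
    simp only [hqdef, ukfSigma]
    rw [dif_neg (by omega), dif_neg (by omega)]
  have hq1 : ∀ k (hk : k < nx), q (k+1) = xhat + s • (fun j => S j ⟨k, hk⟩) := by
    intro k hk
    simp only [hqdef, ukfSigma]
    rw [dif_pos ⟨by omega, by omega⟩, hsdef]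
    have hfn : (fun j => S j (⟨k+1-1, by omega⟩ : Fin nx)) = (fun j => S j ⟨k, hk⟩) := by
      funext j; exact congrArg (S j) (Fin.mk_eq_mk.mpr (by omega))
    rw [hfn]
  have hq2 : ∀ k (hk : k < nx), q (nx+k+1) = xhat - s • (fun j => S j ⟨k, hk⟩) := by
    intro k hk
    simp only [hqdef, ukfSigma]
    rw [dif_neg (by omega), dif_pos ⟨by omega, by omega⟩, hsdef]
    have hfn : (fun j => S j (⟨nx+k+1-nx-1, by omega⟩ : Fin nx)) = (fun j => S j ⟨k, hk⟩) := by
      funext j; exact congrArg (S j) (Fin.mk_eq_mk.mpr (by omega))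
    rw [hfn]
  have hωsum : ∑ i ∈ Finset.range (2*nx+1), ω i = 1 := by
    rw [Finset.sum_range_succ']
    have h1 : ∀ i ∈ Finset.range (2*nx), ω (i+1) = d := fun i _ => hωs i
    rw [Finset.sum_congr rfl h1, Finset.sum_const, Finset.card_range, hω0, nsmul_eq_mul, hd]
    push_cast
    field_simp
  have hqsum : ∑ i ∈ Finset.range (2*nx+1), ω i • q i = xhat := by
    rw [Finset.sum_range_succ']
    have hsplit : ∑ i ∈ Finset.range (2*nx), ω (i+1) • q (i+1)
        = ∑ i ∈ Finset.range nx, (ω (i+1) • q (i+1) + ω (nx+i+1) • q (nx+i+1)) := by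
      rw [← Finset.sum_range_add_sum_Ico _ (by omega : nx ≤ 2*nx),
        Finset.sum_Ico_eq_sum_range]
      have h2 : 2*nx - nx = nx := by omega
      rw [h2, ← Finset.sum_add_distrib]
    rw [hsplit]
    have hpair : ∀ i ∈ Finset.range nx,
        ω (i+1) • q (i+1) + ω (nx+i+1) • q (nx+i+1) = (2*d) • xhat := by
      intro i hi
      have hilt : i < nx := Finset.mem_range.mp hi
      rw [hq1 i hilt, show nx+i+1 = (nx+i)+1 from rfl, hωs, hωs] at *
      rw [hq2 i hilt]
      rw [smul_add, smul_sub]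
      module
    rw [Finset.sum_congr rfl hpair, Finset.sum_const, Finset.card_range, hq0, hω0]
    rw [← Nat.cast_smul_eq_nsmul ℝ, smul_smul, ← add_smul]
    have hco : (nx : ℝ) * (2*d) + κ / ((nx:ℝ)+κ) = 1 := by
      rw [hd]; field_simp
    rw [hco, one_smul]
  -- Conjunct 1
  have hy1 : norm2 yhat ≤ δh := by
    rw [hyhat]
    exact norm2_weighted_sum_le _ _ _ _ (fun i _ => hωnn i) hωsum (fun i _ => hh (q i))
  -- facts about R
  have hqfR : ∀ x : Fin ny → ℝ, 0 ≤ x ⬝ᵥ (R *ᵥ x) := by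
    intro x
    have := hR.dotProduct_mulVec_nonneg x
    simpa using this
  have hRsym : ∀ i j, R j i = R i j := by
    intro i j
    have h2 := congrFun (congrFun hR.1 i) j
    simpa [conjTranspose_apply] using h2
  -- quadratic form of Sy
  have hqfSy : ∀ x : Fin ny → ℝ, x ⬝ᵥ (Sy *ᵥ x)
      = (∑ k ∈ Finset.range (2*nx+1), ω k * (hv k ⬝ᵥ x)^2) - (yhat ⬝ᵥ x)^2
        + x ⬝ᵥ (R *ᵥ x) := by
    intro x
    have hT1 : ∀ k ∈ Finset.range (2*nx+1),
        x ⬝ᵥ ((ω k • vecMulVec (hv k) (hv k)) *ᵥ x) = ω k * (hv k ⬝ᵥ x)^2 := by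
      intro k _
      rw [smul_mulVec, dotProduct_smul, vecMulVec_mulVec', dotProduct_smul, smul_eq_mul,
        smul_eq_mul, dotProduct_comm x (hv k), sq]
    have hT2 : x ⬝ᵥ (vecMulVec yhat yhat *ᵥ x) = (yhat ⬝ᵥ x)^2 := by
      rw [vecMulVec_mulVec', dotProduct_smul, smul_eq_mul, dotProduct_comm x yhat, sq]
    rw [hSy, add_mulVec, sub_mulVec, dotProduct_add, dotProduct_sub, sum_mulVec',
      dotProduct_sum', Finset.sum_congr rfl hT1, hT2]
  have hyx : ∀ x : Fin ny → ℝ,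
      yhat ⬝ᵥ x = ∑ k ∈ Finset.range (2*nx+1), ω k * (hv k ⬝ᵥ x) := by
    intro x
    rw [hyhat]
    simp only [dotProduct, Finset.sum_apply, Pi.smul_apply, smul_eq_mul, Finset.sum_mul,
      Finset.mul_sum]
    rw [Finset.sum_comm]
    exact Finset.sum_congr rfl fun k _ => Finset.sum_congr rfl fun j _ => by ring
  have hJ : ∀ x : Fin ny → ℝ,
      (yhat ⬝ᵥ x)^2 ≤ ∑ k ∈ Finset.range (2*nx+1), ω k * (hv k ⬝ᵥ x)^2 := by
    intro x
    rw [hyx x]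
    have e1 : ∀ k ∈ Finset.range (2*nx+1), ω k * (hv k ⬝ᵥ x)
        = Real.sqrt (ω k) * (Real.sqrt (ω k) * (hv k ⬝ᵥ x)) := fun k _ => by
      rw [← mul_assoc, Real.mul_self_sqrt (hωnn k)]
    rw [Finset.sum_congr rfl e1]
    calc (∑ k ∈ Finset.range (2*nx+1), Real.sqrt (ω k) * (Real.sqrt (ω k) * (hv k ⬝ᵥ x)))^2
        ≤ (∑ k ∈ Finset.range (2*nx+1), Real.sqrt (ω k)^2)
          * (∑ k ∈ Finset.range (2*nx+1), (Real.sqrt (ω k) * (hv k ⬝ᵥ x))^2) :=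
          Finset.sum_mul_sq_le_sq_mul_sq _ _ _
      _ = ∑ k ∈ Finset.range (2*nx+1), ω k * (hv k ⬝ᵥ x)^2 := by
          have e2 : ∀ k ∈ Finset.range (2*nx+1), Real.sqrt (ω k)^2 = ω k :=
            fun k _ => Real.sq_sqrt (hωnn k)
          have e3 : ∀ k ∈ Finset.range (2*nx+1),
              (Real.sqrt (ω k) * (hv k ⬝ᵥ x))^2 = ω k * (hv k ⬝ᵥ x)^2 := by
            intro k _
            rw [mul_pow, Real.sq_sqrt (hωnn k)]
          rw [Finset.sum_congr rfl e2, Finset.sum_congr rfl e3, hωsum, one_mul]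
  -- Conjunct 2
  have hSyH : Sy.IsHermitian := by
    apply isHermitian_of_symm
    intro i j
    simp only [hSy, Matrix.sub_apply, Matrix.add_apply, Matrix.sum_apply, Matrix.smul_apply,
      vecMulVec_apply, smul_eq_mul]
    rw [hRsym i j]
    congr 1
    congr 1
    · exact Finset.sum_congr rfl fun k _ => by ring
    · ring
  have hSyPSD : Sy.PosSemidef := by
    refine PosSemidef.of_dotProduct_mulVec_nonneg hSyH fun x => ?_
    have hx : star x = x := by simp
    rw [hx, hqfSy x]
    have := hJ x
    have := hqfR x
    linarith
  -- Conjunct 3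
  have hSysym : ∀ i j, Sy j i = Sy i j := by
    intro i j
    have h2 := congrFun (congrFun hSyH i) j
    simpa [conjTranspose_apply] using h2
  have hub : psdLE Sy ((δh^2 + rbar) • 1) := by
    refine PosSemidef.of_dotProduct_mulVec_nonneg ?_ fun x => ?_
    · apply isHermitian_of_symm
      intro i j
      by_cases hij : i = j
      · subst hij; rfl
      · simp only [Matrix.sub_apply, Matrix.smul_apply, Matrix.one_apply, smul_eq_mul]
        rw [if_neg hij, if_neg (show ¬ j = i from fun h2 => hij h2.symm), hSysym i j]
    · have hx : star x = x := by simp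
      rw [hx, sub_mulVec, smul_mulVec, one_mulVec, dotProduct_sub, dotProduct_smul,
        smul_eq_mul]
      have hA : ∑ k ∈ Finset.range (2*nx+1), ω k * (hv k ⬝ᵥ x)^2 ≤ δh^2 * (x ⬝ᵥ x) := by
        have hterm : ∀ k ∈ Finset.range (2*nx+1),
            ω k * (hv k ⬝ᵥ x)^2 ≤ ω k * (δh^2 * (x ⬝ᵥ x)) := by
          intro k _
          refine mul_le_mul_of_nonneg_left ?_ (hωnn k)
          calc (hv k ⬝ᵥ x)^2 = |hv k ⬝ᵥ x|^2 := (sq_abs _).symm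
            _ ≤ (norm2 (hv k) * norm2 x)^2 :=
                pow_le_pow_left₀ (abs_nonneg _) (abs_dot_le _ _) 2
            _ = norm2 (hv k)^2 * norm2 x^2 := by ring
            _ ≤ δh^2 * norm2 x^2 :=
                mul_le_mul_of_nonneg_right
                  (pow_le_pow_left₀ (norm2_nonneg _) (hh (q k)) 2) (sq_nonneg _)
            _ = δh^2 * (x ⬝ᵥ x) := by rw [sq_norm2]
        calc ∑ k ∈ Finset.range (2*nx+1), ω k * (hv k ⬝ᵥ x)^2
            ≤ ∑ k ∈ Finset.range (2*nx+1), ω k * (δh^2 * (x ⬝ᵥ x)) :=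
              Finset.sum_le_sum hterm
          _ = δh^2 * (x ⬝ᵥ x) := by rw [← Finset.sum_mul, hωsum, one_mul]
      have hB : x ⬝ᵥ (R *ᵥ x) ≤ rbar * (x ⬝ᵥ x) := by
        have h2 := PosSemidef.dotProduct_mulVec_nonneg hRbar x
        rw [show star x = x by simp, sub_mulVec, smul_mulVec, one_mulVec,
          dotProduct_sub, dotProduct_smul, smul_eq_mul] at h2
        linarith
      have hC : 0 ≤ (yhat ⬝ᵥ x)^2 := sq_nonneg _
      rw [hqfSy x]
      linarith
  -- Conjunct 4
  have hq_pt : ∀ i, ∑ k ∈ Finset.range (2*nx+1), ω k * q k i = xhat i := by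
    intro i
    have h2 := congrFun hqsum i
    simpa [Finset.sum_apply] using h2
  have hy_pt : ∀ j, ∑ k ∈ Finset.range (2*nx+1), ω k * hv k j = yhat j := by
    intro j
    have h2 := congrFun hyhat j
    simpa [Finset.sum_apply] using h2.symm
  have hSxyId : Sxy = ∑ i ∈ Finset.range (2*nx+1),
      ω i • vecMulVec (q i - xhat) (hv i - yhat) := by
    rw [hSxy]
    ext i j
    simp only [Matrix.sub_apply, Matrix.sum_apply, Matrix.smul_apply, vecMulVec_apply,
      smul_eq_mul, Pi.sub_apply]
    have expand : ∑ k ∈ Finset.range (2*nx+1), ω k * ((q k i - xhat i) * (hv k j - yhat j))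
        = (∑ k ∈ Finset.range (2*nx+1), ω k * (q k i * hv k j))
          - yhat j * (∑ k ∈ Finset.range (2*nx+1), ω k * q k i)
          - xhat i * (∑ k ∈ Finset.range (2*nx+1), ω k * hv k j)
          + xhat i * yhat j * (∑ k ∈ Finset.range (2*nx+1), ω k) := by
      rw [Finset.mul_sum, Finset.mul_sum, Finset.mul_sum, ← Finset.sum_sub_distrib,
        ← Finset.sum_sub_distrib, ← Finset.sum_add_distrib]
      exact Finset.sum_congr rfl fun k _ => by ring
    rw [expand, hq_pt i, hy_pt j, hωsum]
    ring
  -- Conjunct 5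
  have hdiff : ∀ i ∈ Finset.range (2*nx+1),
      norm2 (q i - xhat) ≤ Real.sqrt (((nx:ℝ)+κ) * sbar) := by
    intro i hi
    have hi' : i < 2*nx+1 := Finset.mem_range.mp hi
    have hcolb : ∀ (k : Fin nx), s * norm2 (fun j => S j k)
        ≤ Real.sqrt (((nx:ℝ)+κ) * sbar) := by
      intro k
      rw [Real.sqrt_mul hnκ.le, ← hsdef]
      exact mul_le_mul_of_nonneg_left (norm2_col_le S sbar hCov' k)
        (hsdef ▸ Real.sqrt_nonneg _)
    rcases Nat.eq_zero_or_pos i with rfl | hipos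
    · rw [hq0, sub_self, norm2_zero]
      exact Real.sqrt_nonneg _
    · by_cases hle : i ≤ nx
      · obtain ⟨k, rfl⟩ : ∃ k, i = k + 1 := ⟨i - 1, by omega⟩
        have hk : k < nx := by omega
        rw [hq1 k hk, add_sub_cancel_left, norm2_smul,
          abs_of_nonneg (hsdef ▸ Real.sqrt_nonneg _)]
        exact hcolb ⟨k, hk⟩
      · obtain ⟨k, rfl⟩ : ∃ k, i = nx + k + 1 := ⟨i - nx - 1, by omega⟩
        have hk : k < nx := by omega
        rw [hq2 k hk, sub_sub_cancel_left, norm2_neg, norm2_smul,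
          abs_of_nonneg (hsdef ▸ Real.sqrt_nonneg _)]
        exact hcolb ⟨k, hk⟩
  have hvdiff : ∀ i, norm2 (hv i - yhat) ≤ 2*δh := by
    intro i
    have := norm2_sub_le (hv i) yhat
    have := hh (q i)
    linarith
  have hSxyBound : specNorm Sxy ≤ 2 * δh * Real.sqrt (((nx:ℝ)+κ) * sbar) := by
    rw [hSxyId]
    calc specNorm (∑ i ∈ Finset.range (2*nx+1), ω i • vecMulVec (q i - xhat) (hv i - yhat))
        ≤ ∑ i ∈ Finset.range (2*nx+1), specNorm (ω i • vecMulVec (q i - xhat) (hv i - yhat)) :=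
          specNorm_sum_le _ _
      _ ≤ ∑ i ∈ Finset.range (2*nx+1), ω i * (Real.sqrt (((nx:ℝ)+κ) * sbar) * (2*δh)) := by
          refine Finset.sum_le_sum fun i hi => ?_
          rw [specNorm_smul, abs_of_nonneg (hωnn i)]
          refine mul_le_mul_of_nonneg_left ?_ (hωnn i)
          calc specNorm (vecMulVec (q i - xhat) (hv i - yhat))
              ≤ norm2 (q i - xhat) * norm2 (hv i - yhat) := specNorm_vecMulVec_le _ _
            _ ≤ Real.sqrt (((nx:ℝ)+κ) * sbar) * (2*δh) :=
                mul_le_mul (hdiff i hi) (hvdiff i) (norm2_nonneg _) (Real.sqrt_nonneg _)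
      _ = 2 * δh * Real.sqrt (((nx:ℝ)+κ) * sbar) := by
          rw [← Finset.sum_mul, hωsum, one_mul]; ring
  exact ⟨hy1, hSyPSD, hub, hSxyId, hSxyBound⟩

end
end
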